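/- Let f, g be functions on ℝ^m, ℝ^n with inf_{x,y} [f(x) + g(y) − (1/(2L_g))‖∇g(y)‖²] = L̲ > −∞, and suppose β, L_g, σ_B > 0 with 1/(2L_g) ≥ 1/(2βσ_B). If a point (x, y, λ) satisfies Bᵀλ = ∇g(y) and ‖λ‖² ≤ (1/σ_B)‖Bᵀλ‖², then the augmented Lagrangian L_β(x,y,λ) = f(x) + g(y) − ⟨λ, Ax+By−b⟩ + (β/2)‖Ax+By−b‖² satisfies L_β(x,y,λ) ≥ L̲ + (1/(2L_g) − 1/(2βσ_B))‖Bᵀλ‖² + (β/2)‖Ax+By−b − λ/β‖². -/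

import Mathlib

open Matrix

theorem stmt_13 {l m n : ℕ}
    (f : EuclideanSpace ℝ (Fin m) → ℝ) (g : EuclideanSpace ℝ (Fin n) → ℝ)
    (g' : EuclideanSpace ℝ (Fin n) → EuclideanSpace ℝ (Fin n))
    (hgrad : ∀ y, HasGradientAt g (g' y) y)
    (A : Matrix (Fin l) (Fin m) ℝ) (B : Matrix (Fin l) (Fin n) ℝ) (b : EuclideanSpace ℝ (Fin l))
    (β Lg σB Lbar : ℝ) (hβ : 0 < β) (hLg : 0 < Lg) (hσB : 0 < σB)
    (hcmp : 1 / (2 * β * σB) ≤ 1 / (2 * Lg))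
    (hinf : IsGLB {r : ℝ | ∃ x y, r = f x + g y - (1 / (2 * Lg)) * ‖g' y‖ ^ 2} Lbar)
    (x : EuclideanSpace ℝ (Fin m)) (y : EuclideanSpace ℝ (Fin n))
    (lam : EuclideanSpace ℝ (Fin l))
    (h1 : Matrix.toEuclideanLin Bᵀ lam = g' y)
    (h2 : ‖lam‖ ^ 2 ≤ (1 / σB) * ‖Matrix.toEuclideanLin Bᵀ lam‖ ^ 2) :
    Lbar + (1 / (2 * Lg) - 1 / (2 * β * σB)) * ‖Matrix.toEuclideanLin Bᵀ lam‖ ^ 2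
        + (β / 2) * ‖Matrix.toEuclideanLin A x + Matrix.toEuclideanLin B y - b - β⁻¹ • lam‖ ^ 2 ≤
      f x + g y - (inner ℝ lam (Matrix.toEuclideanLin A x + Matrix.toEuclideanLin B y - b) : ℝ)
        + (β / 2) * ‖Matrix.toEuclideanLin A x + Matrix.toEuclideanLin B y - b‖ ^ 2 := by
  have hL : Lbar ≤ f x + g y - (1 / (2 * Lg)) * ‖g' y‖ ^ 2 := hinf.1 ⟨x, y, rfl⟩
  set r := Matrix.toEuclideanLin A x + Matrix.toEuclideanLin B y - b with hr
  have hexp : ‖r - β⁻¹ • lam‖ ^ 2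
      = ‖r‖ ^ 2 - 2 * (β⁻¹ * (inner ℝ lam r : ℝ)) + β⁻¹ ^ 2 * ‖lam‖ ^ 2 := by
    rw [norm_sub_sq_real, real_inner_smul_right, norm_smul, real_inner_comm]
    have : |β⁻¹| = β⁻¹ := abs_of_pos (by positivity)
    simp [this, mul_pow]
  rw [← h1] at hL
  set c := ‖Matrix.toEuclideanLin Bᵀ lam‖ ^ 2 with hc
  have hc0 : 0 ≤ c := by positivity
  have hlam : ‖lam‖ ^ 2 ≤ (1 / σB) * c := h2
  rw [hexp]
  have e1 : β / 2 * (β⁻¹ ^ 2 * ‖lam‖ ^ 2) = ‖lam‖ ^ 2 / (2 * β) := by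
    field_simp
  have e2 : 1 / (2 * β * σB) * c = (1 / σB * c) / (2 * β) := by
    field_simp
  have e3 : β / 2 * (2 * (β⁻¹ * (inner ℝ lam r : ℝ))) = (inner ℝ lam r : ℝ) := by
    field_simp
  have key : ‖lam‖ ^ 2 / (2 * β) ≤ (1 / σB * c) / (2 * β) :=
    div_le_div_of_nonneg_right hlam (by positivity) |>.trans_eq rfl
  nlinarith [key, hL]
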